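/- Let D ⊆ E admit a d-flow and let e ∈ E. Then A(D ⊕ e) ≠ A(D ⊕ rev e) if and only if e ∈ A(D + e) or rev e ∈ A(D + e). -/

import Mathlib

open Finset

section Defs

variable {V : Type*}

/-- Reversal of a directed edge. -/
def drev (e : V × V) : V × V := (e.2, e.1)

/-- `K` is a subgraph of the (symmetric) edge set `E`: it contains either both or
neither of `e` and `drev e` for every `e ∈ E`. -/
def IsSubgraph [DecidableEq V] (E K : Finset (V × V)) : Prop :=
  K ⊆ E ∧ ∀ e ∈ E, (e ∈ K ↔ drev e ∈ K)

/-- `L` is an orientation of the (symmetric) edge set `E`: it contains exactly one of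
`e` and `drev e` for every `e ∈ E`. -/
def IsOrientation [DecidableEq V] (E L : Finset (V × V)) : Prop :=
  L ⊆ E ∧ ∀ e ∈ E, (e ∈ L ↔ drev e ∉ L)

variable [Fintype V] [DecidableEq V]

/-- `f` is a `d`-flow on the directed subgraph `D` of the graph with edge set `E`. -/
def IsFlow (E D : Finset (V × V)) (d : V → ℤ) (f : V × V → ℝ) : Prop :=
  (∀ e ∈ E, 0 ≤ f e ∧ f e ≤ 1) ∧
  (∀ e, e ∉ D → f e = 0) ∧
  ∀ u : V,
    ((Finset.univ.filter (fun v : V => (u, v) ∈ E)).sum fun v => f (u, v)) -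
      ((Finset.univ.filter (fun v : V => (v, u) ∈ E)).sum fun v => f (v, u)) = (d u : ℝ)

/-- A `d`-flow exists on `D`. -/
def AdmitsFlow (E D : Finset (V × V)) (d : V → ℤ) : Prop :=
  ∃ f : V × V → ℝ, IsFlow E D d f

/-- The `w`-cost of a flow `f`. -/
def flowCost (E : Finset (V × V)) (w : V × V → ℝ) (f : V × V → ℝ) : ℝ :=
  ∑ e ∈ E, w e * f e

/-- `f` is a min-cost `d`-flow on `D`. -/
def IsMinCostFlow (E D : Finset (V × V)) (d : V → ℤ) (w : V × V → ℝ)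
    (f : V × V → ℝ) : Prop :=
  IsFlow E D d f ∧ ∀ g : V × V → ℝ, IsFlow E D d g → flowCost E w f ≤ flowCost E w g

/-- The `{0,1}`-valued function determined by a set of edges. -/
def ind (S : Finset (V × V)) : V × V → ℝ := fun e => if e ∈ S then 1 else 0

/-- `A` assigns to every flow-admitting `D ⊆ E` the (edge set of the) unique,
`{0,1}`-valued min-cost `d`-flow on `D`. -/
def GoodA (E : Finset (V × V)) (d : V → ℤ) (w : V × V → ℝ)
    (A : Finset (V × V) → Finset (V × V)) : Prop :=
  ∀ D : Finset (V × V), D ⊆ E → AdmitsFlow E D d →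
    IsMinCostFlow E D d w (ind (A D)) ∧
    ∀ f : V × V → ℝ, IsMinCostFlow E D d w f → f = ind (A D)

/-- `A(D) = A(D')`: both `D` and `D'` admit a `d`-flow and their unique min-cost
`d`-flows coincide.  (If one of them admits no `d`-flow this is false.) -/
def AEq (E : Finset (V × V)) (d : V → ℤ) (A : Finset (V × V) → Finset (V × V))
    (D D' : Finset (V × V)) : Prop :=
  AdmitsFlow E D d ∧ AdmitsFlow E D' d ∧ A D = A D'

/-- `D ⊕ e := (D ∪ {e}) \ {drev e}`. -/
def oplus (D : Finset (V × V)) (e : V × V) : Finset (V × V) := insert e D \ {drev e}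

/-- `D + e := D ∪ {e, drev e}`. -/
def padd (D : Finset (V × V)) (e : V × V) : Finset (V × V) := D ∪ {e, drev e}

/-- `D − e := D \ {e, drev e}`. -/
def psub (D : Finset (V × V)) (e : V × V) : Finset (V × V) := D \ {e, drev e}

/-- The representative of `{e, drev e}` lying in the reference orientation `E'`. -/
def chi (E' : Finset (V × V)) (e : V × V) : V × V := if e ∈ E' then e else drev e

/-- The map `φ_e`. -/
noncomputable def phiE (E : Finset (V × V)) (d : V → ℤ)
    (A : Finset (V × V) → Finset (V × V)) (E' : Finset (V × V))
    (e : V × V) (D : Finset (V × V)) : Finset (V × V) := by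
  classical
  exact
    if ¬ AEq E d A D (oplus D e) then oplus D (drev e)
    else if ¬ AEq E d A D (oplus D (drev e)) then oplus D e
    else if e ∈ D then oplus D (chi E' e) else oplus D (drev (chi E' e))

/-- The map `ψ_e`. -/
noncomputable def psiE (E : Finset (V × V)) (d : V → ℤ)
    (A : Finset (V × V) → Finset (V × V)) (E' : Finset (V × V))
    (e : V × V) (D : Finset (V × V)) : Finset (V × V) := by
  classical
  exact
    if ¬ AEq E d A D (padd D e) then psub D e
    else if ¬ AEq E d A D (psub D e) then padd D e
    else if chi E' e ∈ D then padd D e else psub D e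

end Defs

section ProofAux
set_option linter.unusedSectionVars false

variable {V : Type*} [Fintype V] [DecidableEq V]

lemma drev_drev (e : V × V) : drev (drev e) = e := rfl

lemma ind_injective {S T : Finset (V × V)} (h : ind S = ind T) : S = T := by
  ext x
  have hx := congrFun h x
  by_cases h1 : x ∈ S <;> by_cases h2 : x ∈ T <;>
    simp [ind, h1, h2] at hx <;> simp [h1, h2]

lemma IsFlow.mono {E D1 D2 : Finset (V × V)} {d : V → ℤ} {f : V × V → ℝ}
    (h : IsFlow E D1 d f) (h12 : D1 ⊆ D2) : IsFlow E D2 d f :=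
  ⟨h.1, fun x hx => h.2.1 x (fun hxD => hx (h12 hxD)), h.2.2⟩

lemma isFlow_oplus {E D : Finset (V × V)} {d : V → ℤ} {f : V × V → ℝ} (e : V × V)
    (hf : IsFlow E (padd D e) d f) (h0 : f (drev e) = 0) :
    IsFlow E (oplus D e) d f := by
  refine ⟨hf.1, fun x hx => ?_, hf.2.2⟩
  by_cases hxe : x = drev e
  · rw [hxe]; exact h0
  · apply hf.2.1
    intro hxp
    apply hx
    simp only [oplus, padd, Finset.mem_union, Finset.mem_sdiff, Finset.mem_insert,
      Finset.mem_singleton] at hxp ⊢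
    rcases hxp with h | h
    · exact ⟨Or.inr h, hxe⟩
    · rcases h with h | h
      · exact ⟨Or.inl h, hxe⟩
      · exact absurd h hxe

lemma sum_ite_out (E : Finset (V × V)) {c : V × V} (hc : c ∈ E) (m : ℝ) (u : V) :
    (∑ v ∈ Finset.univ.filter (fun v : V => (u, v) ∈ E), (if (u, v) = c then m else 0))
      = if u = c.1 then m else 0 := by
  by_cases hu : u = c.1
  · subst hu
    rw [if_pos rfl]
    have h1 : ∀ v : V, ((c.1, v) = c) = (v = c.2) := by
      intro v; simp [Prod.ext_iff]
    simp only [h1]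
    rw [Finset.sum_ite_eq' (Finset.univ.filter fun v : V => (c.1, v) ∈ E) c.2 (fun _ => m)]
    simp [hc]
  · rw [if_neg hu]
    apply Finset.sum_eq_zero
    intro v _
    rw [if_neg]
    intro h
    exact hu (by rw [← h])

lemma sum_ite_in (E : Finset (V × V)) {c : V × V} (hc : c ∈ E) (m : ℝ) (u : V) :
    (∑ v ∈ Finset.univ.filter (fun v : V => (v, u) ∈ E), (if (v, u) = c then m else 0))
      = if u = c.2 then m else 0 := by
  by_cases hu : u = c.2
  · subst hu
    rw [if_pos rfl]
    have h1 : ∀ v : V, ((v, c.2) = c) = (v = c.1) := by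
      intro v; simp [Prod.ext_iff]
    simp only [h1]
    rw [Finset.sum_ite_eq' (Finset.univ.filter fun v : V => (v, c.2) ∈ E) c.1 (fun _ => m)]
    simp [hc]
  · rw [if_neg hu]
    apply Finset.sum_eq_zero
    intro v _
    rw [if_neg]
    intro h
    exact hu (by rw [← h])

lemma cancel_isFlow {E D : Finset (V × V)} {d : V → ℤ} {g : V × V → ℝ} {e : V × V}
    (heE : e ∈ E) (hre : drev e ∈ E) (hne : e ≠ drev e) (hg : IsFlow E D d g) {m : ℝ}
    (hm0 : 0 ≤ m) (hm1 : m ≤ g e) (hm2 : m ≤ g (drev e)) :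
    IsFlow E D d (fun x => g x - ((if x = e then m else 0) + (if x = drev e then m else 0))) := by
  refine ⟨?_, ?_, ?_⟩
  · intro x hx
    have hb := hg.1 x hx
    have hbe := hg.1 e heE
    have hbr := hg.1 (drev e) hre
    by_cases h1 : x = e
    · subst h1
      constructor <;> simp [hne] <;> linarith [hb.1, hb.2]
    · by_cases h2 : x = drev e
      · subst h2
        constructor <;> simp [h1] <;> linarith [hb.1, hb.2]
      · simp [h1, h2, hb.1, hb.2]
  · intro x hx
    have h0 := hg.2.1 x hx
    by_cases h1 : x = e
    · subst h1
      have : m = 0 := le_antisymm (h0 ▸ hm1) hm0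
      simp [this, if_neg hne, h0]
    · by_cases h2 : x = drev e
      · subst h2
        have : m = 0 := le_antisymm (h0 ▸ hm2) hm0
        simp [this, h0]
      · simp [h1, h2, h0]
  · intro u
    have hd := hg.2.2 u
    have hout :
        (∑ v ∈ Finset.univ.filter (fun v : V => (u, v) ∈ E),
            (g (u, v) - ((if (u, v) = e then m else 0) + (if (u, v) = drev e then m else 0))))
          = (∑ v ∈ Finset.univ.filter (fun v : V => (u, v) ∈ E), g (u, v))
            - ((if u = e.1 then m else 0) + (if u = e.2 then m else 0)) := by
      rw [Finset.sum_sub_distrib, Finset.sum_add_distrib, sum_ite_out E heE m u,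
        sum_ite_out E hre m u]
      simp [drev]
      split_ifs with h <;> simp [h]
    have hin :
        (∑ v ∈ Finset.univ.filter (fun v : V => (v, u) ∈ E),
            (g (v, u) - ((if (v, u) = e then m else 0) + (if (v, u) = drev e then m else 0))))
          = (∑ v ∈ Finset.univ.filter (fun v : V => (v, u) ∈ E), g (v, u))
            - ((if u = e.2 then m else 0) + (if u = e.1 then m else 0)) := by
      rw [Finset.sum_sub_distrib, Finset.sum_add_distrib, sum_ite_in E heE m u,
        sum_ite_in E hre m u]
      simp [drev]
      split_ifs with h <;> simp [h]
    simp only []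
    rw [hout, hin]
    linarith [hd]

end ProofAux

theorem minCostFlow_oplus_ne_oplus_rev_iff
    {V : Type*} [Fintype V] [DecidableEq V]
    (E : Finset (V × V)) (hE_symm : ∀ e, e ∈ E ↔ drev e ∈ E)
    (hE_ne : ∀ e ∈ E, e.1 ≠ e.2)
    (d : V → ℤ) (hd : ∑ u : V, d u = 0)
    (w : V × V → ℝ) (hw : ∀ e ∈ E, 0 < w e)
    (A : Finset (V × V) → Finset (V × V)) (hA : GoodA E d w A)
    (D : Finset (V × V)) (hD : D ⊆ E) (hDf : AdmitsFlow E D d)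
    (e : V × V) (he : e ∈ E) :
    ¬ AEq E d A (oplus D e) (oplus D (drev e)) ↔
      (e ∈ A (padd D e) ∨ drev e ∈ A (padd D e)) := by
    classical
  have hre : drev e ∈ E := (hE_symm e).1 he
  have hne : e ≠ drev e := by
    intro h
    exact hE_ne e he (congrArg Prod.fst h)
  have hsub_padd : padd D e ⊆ E := by
    intro x hx
    simp only [padd, Finset.mem_union, Finset.mem_insert, Finset.mem_singleton] at hx
    rcases hx with h | h | h
    · exact hD h
    · exact h ▸ he
    · exact h ▸ hre
  have hop1 : oplus D e ⊆ padd D e := by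
    intro x hx
    simp only [oplus, padd, Finset.mem_sdiff, Finset.mem_insert, Finset.mem_union,
      Finset.mem_singleton] at hx ⊢
    tauto
  have hop2 : oplus D (drev e) ⊆ padd D e := by
    intro x hx
    simp only [oplus, padd, drev_drev, Finset.mem_sdiff, Finset.mem_insert, Finset.mem_union,
      Finset.mem_singleton] at hx ⊢
    tauto
  have hpadd_comm : padd D (drev e) = padd D e := by
    ext x
    simp only [padd, drev_drev, Finset.mem_union, Finset.mem_insert, Finset.mem_singleton]
    tauto
  have hadm : AdmitsFlow E (padd D e) d := by
    obtain ⟨f, hf⟩ := hDf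
    exact ⟨f, hf.mono (by intro x hx; simp [padd, hx])⟩
  obtain ⟨hminP, huniqP⟩ := hA (padd D e) hsub_padd hadm
  set F := A (padd D e) with hF
  -- Claim C1 : if neither e nor drev e is in F then AEq holds
  have C1 : e ∉ F → drev e ∉ F → AEq E d A (oplus D e) (oplus D (drev e)) := by
    intro he1 he2
    have hf : IsFlow E (padd D e) d (ind F) := hminP.1
    have hfe : ind F e = 0 := by simp [ind, he1]
    have hfr : ind F (drev e) = 0 := by simp [ind, he2]
    have hflow1 : IsFlow E (oplus D e) d (ind F) := isFlow_oplus e hf hfr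
    have hflow2 : IsFlow E (oplus D (drev e)) d (ind F) :=
      isFlow_oplus (drev e) (hpadd_comm ▸ hf) (by rw [drev_drev]; exact hfe)
    have hmc1 : IsMinCostFlow E (oplus D e) d w (ind F) :=
      ⟨hflow1, fun g hg => hminP.2 g (hg.mono hop1)⟩
    have hmc2 : IsMinCostFlow E (oplus D (drev e)) d w (ind F) :=
      ⟨hflow2, fun g hg => hminP.2 g (hg.mono hop2)⟩
    obtain ⟨hminO1, huniqO1⟩ := hA (oplus D e) (hop1.trans hsub_padd) ⟨_, hflow1⟩
    obtain ⟨hminO2, huniqO2⟩ := hA (oplus D (drev e)) (hop2.trans hsub_padd) ⟨_, hflow2⟩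
    have h1 : ind F = ind (A (oplus D e)) := huniqO1 _ hmc1
    have h2 : ind F = ind (A (oplus D (drev e))) := huniqO2 _ hmc2
    exact ⟨⟨_, hflow1⟩, ⟨_, hflow2⟩, ind_injective (h1.symm.trans h2)⟩
  -- Claim C2 : if AEq holds then neither e nor drev e is in F
  have C2 : AEq E d A (oplus D e) (oplus D (drev e)) → e ∉ F ∧ drev e ∉ F := by
    intro hAEq
    obtain ⟨hadm1, hadm2, heqA⟩ := hAEq
    obtain ⟨hminO1, _⟩ := hA (oplus D e) (hop1.trans hsub_padd) hadm1
    obtain ⟨hminO2, _⟩ := hA (oplus D (drev e)) (hop2.trans hsub_padd) hadm2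
    set S := A (oplus D e) with hS
    rw [← heqA] at hminO2
    have hflow1 : IsFlow E (oplus D e) d (ind S) := hminO1.1
    have hflow2 : IsFlow E (oplus D (drev e)) d (ind S) := hminO2.1
    have hSe : ind S e = 0 := hflow2.2.1 e (by simp [oplus, drev_drev])
    have hSr : ind S (drev e) = 0 := hflow1.2.1 (drev e) (by simp [oplus])
    have hminPadd : IsMinCostFlow E (padd D e) d w (ind S) := by
      refine ⟨hflow1.mono hop1, fun g hg => ?_⟩
      have hge := hg.1 e he
      have hgr := hg.1 (drev e) hre
      set m : ℝ := min (g e) (g (drev e)) with hm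
      have hm0 : 0 ≤ m := le_min hge.1 hgr.1
      have hm1 : m ≤ g e := min_le_left _ _
      have hm2 : m ≤ g (drev e) := min_le_right _ _
      set g' : V × V → ℝ :=
        fun x => g x - ((if x = e then m else 0) + (if x = drev e then m else 0)) with hg'
      have hg'flow : IsFlow E (padd D e) d g' :=
        cancel_isFlow he hre hne hg hm0 hm1 hm2
      have hcost : flowCost E w g' ≤ flowCost E w g := by
        apply Finset.sum_le_sum
        intro x hx
        have : g' x ≤ g x := by
          simp only [hg']
          have : 0 ≤ (if x = e then m else 0) + (if x = drev e then m else 0) := by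
            positivity
          linarith
        exact mul_le_mul_of_nonneg_left this (le_of_lt (hw x hx))
      rcases le_total (g e) (g (drev e)) with hle | hle
      · -- m = g e, so g' e = 0, g' is a flow on oplus D (drev e)
        have hge0 : g' e = 0 := by
          show g e - ((if e = e then m else 0) + (if e = drev e then m else 0)) = 0
          rw [if_pos rfl, if_neg hne, hm, min_eq_left hle]
          ring
        have hg'op : IsFlow E (oplus D (drev e)) d g' :=
          isFlow_oplus (drev e) (hpadd_comm ▸ hg'flow) (by rw [drev_drev]; exact hge0)
        calc flowCost E w (ind S) ≤ flowCost E w g' := hminO2.2 g' hg'op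
          _ ≤ flowCost E w g := hcost
      · -- m = g (drev e), so g' (drev e) = 0, g' is a flow on oplus D e
        have hgr0 : g' (drev e) = 0 := by
          show g (drev e) - ((if drev e = e then m else 0) + (if drev e = drev e then m else 0)) = 0
          rw [if_neg (Ne.symm hne), if_pos rfl, hm, min_eq_right hle]
          ring
        have hg'op : IsFlow E (oplus D e) d g' := isFlow_oplus e hg'flow hgr0
        calc flowCost E w (ind S) ≤ flowCost E w g' := hminO1.2 g' hg'op
          _ ≤ flowCost E w g := hcost
    have hSF : S = F := ind_injective (huniqP _ hminPadd)
    rw [← hSF]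
    constructor
    · intro hmem; simp [ind, hmem] at hSe
    · intro hmem; simp [ind, hmem] at hSr
  constructor
  · intro hne'
    by_contra hcon
    push_neg at hcon
    exact hne' (C1 hcon.1 hcon.2)
  · intro hmem hAEq
    obtain ⟨h1, h2⟩ := C2 hAEq
    tauto
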